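/- Tutte's Linking Theorem: if M is a matroid and S, T are disjoint subsets of E(M), then κ_M(S,T) = max{ ⊓_{M/Z}(S,T) : Z ⊆ E(M) \ (S ∪ T) }. -/

import Mathlib

open Set Matroid

namespace Paper

variable {α : Type*}

/-- The deletion `M \ D`. -/
def del (M : Matroid α) (D : Set α) : Matroid α := M ↾ (M.E \ D)

/-- The contraction `M / C`. -/
def contr (M : Matroid α) (C : Set α) : Matroid α := (M✶ ↾ (M.E \ C))✶

/-- `N` is a minor of `M`. -/
def IsMinorOf (N M : Matroid α) : Prop := ∃ C D : Set α, N = del (contr M C) D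

/-- Rank of a set: the maximum size of an independent subset. -/
noncomputable def rk (M : Matroid α) (X : Set α) : ℕ :=
  sSup {n | ∃ I, M.Indep I ∧ I ⊆ X ∧ I.ncard = n}

/-- The rank of a matroid. -/
noncomputable def rank (M : Matroid α) : ℕ := rk M M.E

/-- The connectivity function `λ_M(X) = r(X) + r(E \ X) - r(M)`. -/
noncomputable def conn (M : Matroid α) (X : Set α) : ℤ :=
  (rk M X : ℤ) + (rk M (M.E \ X) : ℤ) - (rank M : ℤ)

/-- Local connectivity `⊓_M(S,T) = r(S) + r(T) - r(S ∪ T)`. -/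
noncomputable def localConn (M : Matroid α) (S T : Set α) : ℤ :=
  (rk M S : ℤ) + (rk M T : ℤ) - (rk M (S ∪ T) : ℤ)

/-- `κ_M(S,T) = min { λ_M(A) : S ⊆ A ⊆ E \ T }`. -/
noncomputable def kappa (M : Matroid α) (S T : Set α) : ℤ :=
  sInf {k : ℤ | ∃ A, S ⊆ A ∧ A ⊆ M.E \ T ∧ conn M A = k}

/-- Two sets are skew if their local connectivity is zero. -/
def SkewSets (M : Matroid α) (S T : Set α) : Prop := localConn M S T = 0

/-- A circuit is a minimal dependent set. -/
def Circuit (M : Matroid α) (C : Set α) : Prop := M.Dep C ∧ ∀ C' ⊂ C, ¬ M.Dep C'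

/-- A cocircuit is a circuit of the dual. -/
def Cocircuit (M : Matroid α) (C : Set α) : Prop := Circuit M✶ C

/-- A matroid is connected if any two elements lie in a common circuit. -/
def Connected (M : Matroid α) : Prop :=
  M.E.Nonempty ∧ ∀ e ∈ M.E, ∀ f ∈ M.E, e = f ∨ ∃ C, Circuit M C ∧ e ∈ C ∧ f ∈ C

/-- `M` is 3-connected: connected with no 2-separation. -/
def ThreeConnected (M : Matroid α) : Prop :=
  Connected M ∧ ∀ X ⊆ M.E, 2 ≤ X.ncard → 2 ≤ (M.E \ X).ncard → 2 ≤ conn M X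

/-- A matroid is simple if every set of at most two elements is independent. -/
def Simple (M : Matroid α) : Prop := ∀ X ⊆ M.E, X.ncard ≤ 2 → M.Indep X

/-- `φ` is an `F`-representation of `M`: independence equals linear independence. -/
def IsRepBy (M : Matroid α) (F : Type*) [Field F] {W : Type*} [AddCommGroup W]
    [Module F W] (φ : α → W) : Prop :=
  ∀ I ⊆ M.E, (M.Indep I ↔ LinearIndependent F (fun e : I => φ e.1))

/-- `M` is representable over the field `F`. -/
def Representable (M : Matroid α) (F : Type*) [Field F] : Prop :=
  ∃ (n : ℕ) (φ : α → (Fin n → F)), IsRepBy M F φ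

/-- `M` is (isomorphic to) the uniform matroid `U_{r,k}`. -/
def IsUniform (M : Matroid α) (r k : ℕ) : Prop :=
  M.E.Finite ∧ M.E.ncard = k ∧ ∀ I ⊆ M.E, (M.Indep I ↔ I.ncard ≤ r)

/-- `M` has a `U_{r,k}`-minor. -/
def HasUniformMinor (M : Matroid α) (r k : ℕ) : Prop :=
  ∃ N, IsMinorOf N M ∧ IsUniform N r k

/-- `M` is isomorphic to the projective geometry `PG(n-1, |F|)`: it has an
`F`-representation by pairwise non-parallel nonzero vectors of `F^n` meeting
every one-dimensional subspace. -/
def IsProjGeom (M : Matroid α) (n : ℕ) (F : Type*) [Field F] : Prop :=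
  ∃ φ : α → (Fin n → F),
    IsRepBy M F φ ∧ (∀ e ∈ M.E, φ e ≠ 0) ∧
    (∀ e ∈ M.E, ∀ f ∈ M.E, e ≠ f → ∀ c : F, φ f ≠ c • φ e) ∧
    (∀ v : Fin n → F, v ≠ 0 → ∃ e ∈ M.E, ∃ c : F, v = c • φ e)

/-- `M` has a `PG(n-1, |F|)`-minor. -/
def HasProjGeomMinor (M : Matroid α) (n : ℕ) (F : Type*) [Field F] : Prop :=
  ∃ N, IsMinorOf N M ∧ IsProjGeom N n F

section RankAPI

variable {M : Matroid α} {X Y I J C R Z A B S T : Set α} {e : α}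

lemma rk_set_nonempty (M : Matroid α) (X : Set α) :
    {n | ∃ I, M.Indep I ∧ I ⊆ X ∧ I.ncard = n}.Nonempty :=
  ⟨0, ∅, M.empty_indep, empty_subset X, ncard_empty α⟩

lemma rk_set_bddAbove (hfin : M.E.Finite) (X : Set α) :
    BddAbove {n | ∃ I, M.Indep I ∧ I ⊆ X ∧ I.ncard = n} := by
  refine ⟨M.E.ncard, ?_⟩
  rintro n ⟨I, hI, -, rfl⟩
  exact ncard_le_ncard hI.subset_ground hfin

lemma ncard_le_rk (hfin : M.E.Finite) (hI : M.Indep I) (hIX : I ⊆ X) : I.ncard ≤ rk M X :=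
  le_csSup (rk_set_bddAbove hfin X) ⟨I, hI, hIX, rfl⟩

lemma rk_eq_ncard (hfin : M.E.Finite) (h : M.IsBasis' I X) : rk M X = I.ncard := by
  refine le_antisymm ?_ (ncard_le_rk hfin h.indep h.subset)
  refine csSup_le (rk_set_nonempty M X) ?_
  rintro n ⟨J, hJ, hJX, rfl⟩
  obtain ⟨J', hJ', hJJ'⟩ := hJ.subset_isBasis'_of_subset hJX
  have hcard : J'.encard = I.encard :=
    (isBase_restrict_iff'.2 hJ').encard_eq_encard_of_isBase (isBase_restrict_iff'.2 h)
  have hJ'fin : J'.Finite := hfin.subset hJ'.indep.subset_ground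
  calc J.ncard ≤ J'.ncard := ncard_le_ncard hJJ' hJ'fin
  _ = I.ncard := by rw [ncard_def, hcard, ← ncard_def]

lemma rk_mono (hfin : M.E.Finite) (h : X ⊆ Y) : rk M X ≤ rk M Y := by
  obtain ⟨I, hI⟩ := M.exists_isBasis' X
  rw [rk_eq_ncard hfin hI]
  exact ncard_le_rk hfin hI.indep (hI.subset.trans h)

lemma rk_le_ncard (hfin : M.E.Finite) (hX : X.Finite) : rk M X ≤ X.ncard := by
  obtain ⟨I, hI⟩ := M.exists_isBasis' X
  rw [rk_eq_ncard hfin hI]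
  exact ncard_le_ncard hI.subset hX

lemma rk_empty (hfin : M.E.Finite) : rk M ∅ = 0 :=
  Nat.le_zero.1 (by simpa using rk_le_ncard hfin finite_empty)

lemma rk_singleton_le (hfin : M.E.Finite) (e : α) : rk M {e} ≤ 1 := by
  simpa using rk_le_ncard hfin (finite_singleton e)

lemma rk_submod (hfin : M.E.Finite) (X Y : Set α) :
    rk M (X ∪ Y) + rk M (X ∩ Y) ≤ rk M X + rk M Y := by
  obtain ⟨I, hI⟩ := M.exists_isBasis' (X ∩ Y)
  obtain ⟨J, hJ, hIJ⟩ := hI.indep.subset_isBasis'_of_subset (hI.subset.trans (inter_subset_left.trans subset_union_left))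
  have hJfin : J.Finite := hfin.subset hJ.indep.subset_ground
  have h1 : (J ∩ X).ncard ≤ rk M X :=
    ncard_le_rk hfin (hJ.indep.subset inter_subset_left) inter_subset_right
  have h2 : (J ∩ Y).ncard ≤ rk M Y :=
    ncard_le_rk hfin (hJ.indep.subset inter_subset_left) inter_subset_right
  have h3 : ((J ∩ X) ∪ (J ∩ Y)).ncard + ((J ∩ X) ∩ (J ∩ Y)).ncard
      = (J ∩ X).ncard + (J ∩ Y).ncard :=
    ncard_union_add_ncard_inter _ _ (hJfin.subset inter_subset_left)
      (hJfin.subset inter_subset_left)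
  have hu : (J ∩ X) ∪ (J ∩ Y) = J := by
    rw [← inter_union_distrib_left]
    exact inter_eq_self_of_subset_left hJ.subset
  have hi : I ⊆ (J ∩ X) ∩ (J ∩ Y) :=
    subset_inter (subset_inter hIJ (hI.subset.trans inter_subset_left))
      (subset_inter hIJ (hI.subset.trans inter_subset_right))
  have h4 : I.ncard ≤ ((J ∩ X) ∩ (J ∩ Y)).ncard :=
    ncard_le_ncard hi ((hJfin.subset inter_subset_left).subset inter_subset_left)
  rw [rk_eq_ncard hfin hJ, rk_eq_ncard hfin hI]
  rw [hu] at h3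
  omega

lemma rk_restrict (M : Matroid α) (R X : Set α) : rk (M ↾ R) X = rk M (X ∩ R) := by
  unfold rk
  congr 1
  ext n
  simp only [mem_setOf_eq, restrict_indep_iff, subset_inter_iff]
  tauto

lemma rk_dual (hfin : M.E.Finite) (hX : X ⊆ M.E) :
    (rk M✶ X : ℤ) = X.ncard + rk M (M.E \ X) - rk M M.E := by
  obtain ⟨J, hJ⟩ := M.exists_isBasis' (M.E \ X)
  obtain ⟨B, hB, hJB⟩ := hJ.indep.exists_isBase_superset
  have hfin' : M✶.E.Finite := by rwa [dual_ground]
  have hXfin : X.Finite := hfin.subset hX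
  have hBfin : B.Finite := hfin.subset hB.subset_ground
  have hJeq : J = B ∩ (M.E \ X) :=
    hJ.eq_of_subset_indep (hB.indep.subset inter_subset_left)
      (subset_inter hJB hJ.subset) inter_subset_right
  have hrkE : rk M M.E = B.ncard := rk_eq_ncard hfin hB.isBasis_ground.isBasis'
  have hrkJ : rk M (M.E \ X) = J.ncard := rk_eq_ncard hfin hJ
  -- the dual rank is the cardinality of X \ B
  have hind : M✶.Indep (X \ B) :=
    (dual_indep_iff_exists (diff_subset.trans hX)).2 ⟨B, hB, disjoint_sdiff_left⟩
  have hge : (X \ B).ncard ≤ rk M✶ X := ncard_le_rk hfin' hind diff_subset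
  have hle : rk M✶ X ≤ (X \ B).ncard := by
    refine csSup_le (rk_set_nonempty M✶ X) ?_
    rintro n ⟨I, hI, hIX, rfl⟩
    obtain ⟨hIE, B', hB', hdisj⟩ := dual_indep_iff_exists'.1 hI
    have hB'fin : B'.Finite := hfin.subset hB'.subset_ground
    have hIXB' : I ⊆ X \ B' := subset_diff.2 ⟨hIX, hdisj⟩
    have c1 : I.ncard ≤ (X \ B').ncard := ncard_le_ncard hIXB' (hXfin.diff)
    have c2 : (X \ B').ncard + (X ∩ B').ncard = X.ncard := by
      rw [← diff_self_inter]
      exact ncard_diff_add_ncard_of_subset inter_subset_left hXfin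
    have c3 : (X \ B).ncard + (X ∩ B).ncard = X.ncard := by
      rw [← diff_self_inter]
      exact ncard_diff_add_ncard_of_subset inter_subset_left hXfin
    have c4 : (B' \ X).ncard + (B' ∩ X).ncard = B'.ncard := by
      rw [← diff_self_inter]
      exact ncard_diff_add_ncard_of_subset inter_subset_left hB'fin
    have c5 : (B \ X).ncard + (B ∩ X).ncard = B.ncard := by
      rw [← diff_self_inter]
      exact ncard_diff_add_ncard_of_subset inter_subset_left hBfin
    have c6 : (B' \ X).ncard ≤ rk M (M.E \ X) :=
      ncard_le_rk hfin (hB'.indep.subset diff_subset)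
        (diff_subset_diff_left hB'.subset_ground)
    have c7 : B \ X = J := by
      rw [hJeq]
      ext x
      simp only [mem_diff, mem_inter_iff]
      exact ⟨fun ⟨h1, h2⟩ => ⟨h1, hB.subset_ground h1, h2⟩, fun ⟨h1, _, h2⟩ => ⟨h1, h2⟩⟩
    have c8 : B'.ncard = B.ncard := by
      rw [ncard_def, hB'.encard_eq_encard_of_isBase hB, ← ncard_def]
    have c9 : (X ∩ B').ncard = (B' ∩ X).ncard := by rw [inter_comm]
    have c10 : (X ∩ B).ncard = (B ∩ X).ncard := by rw [inter_comm]
    rw [c7] at c5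
    omega
  have hXB : (X \ B).ncard + (X ∩ B).ncard = X.ncard := by
    rw [← diff_self_inter]
    exact ncard_diff_add_ncard_of_subset inter_subset_left hXfin
  have hBX : (B \ X).ncard + (B ∩ X).ncard = B.ncard := by
    rw [← diff_self_inter]
    exact ncard_diff_add_ncard_of_subset inter_subset_left hBfin
  have c7 : B \ X = J := by
    rw [hJeq]
    ext x
    simp only [mem_diff, mem_inter_iff]
    exact ⟨fun ⟨h1, h2⟩ => ⟨h1, hB.subset_ground h1, h2⟩, fun ⟨h1, _, h2⟩ => ⟨h1, h2⟩⟩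
  have c10 : (X ∩ B).ncard = (B ∩ X).ncard := by rw [inter_comm]
  have : rk M✶ X = (X \ B).ncard := le_antisymm hle hge
  rw [c7] at hBX
  omega

lemma contr_ground (M : Matroid α) (C : Set α) : (contr M C).E = M.E \ C := rfl

lemma rk_contr (hfin : M.E.Finite) (hC : C ⊆ M.E) (hX : X ⊆ M.E \ C) :
    (rk (contr M C) X : ℤ) = rk M (X ∪ C) - rk M C := by
  set N₁ : Matroid α := M✶ ↾ (M.E \ C) with hN₁
  have hN₁E : N₁.E = M.E \ C := rfl
  have hN₁fin : N₁.E.Finite := hfin.diff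
  have h0 : contr M C = N₁✶ := rfl
  have hfin' : M✶.E.Finite := by rwa [dual_ground]
  have hXfin : X.Finite := hfin.subset (hX.trans diff_subset)
  rw [h0, rk_dual hN₁fin (show X ⊆ N₁.E from hX)]
  have h1 : rk N₁ (N₁.E \ X) = rk M✶ ((M.E \ C) \ X) := by
    rw [hN₁E, rk_restrict, inter_eq_self_of_subset_left diff_subset]
  have h2 : rk N₁ N₁.E = rk M✶ (M.E \ C) := by
    rw [hN₁E, rk_restrict, inter_self]
  have h3 : (rk M✶ ((M.E \ C) \ X) : ℤ)
      = ((M.E \ C) \ X).ncard + rk M (X ∪ C) - rk M M.E := by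
    rw [rk_dual hfin (diff_subset.trans diff_subset)]
    congr 2
    rw [diff_diff_right, diff_diff_cancel_left hC,
      inter_eq_self_of_subset_right (hX.trans diff_subset), union_comm]
  have h4 : (rk M✶ (M.E \ C) : ℤ) = (M.E \ C).ncard + rk M C - rk M M.E := by
    rw [rk_dual hfin diff_subset, diff_diff_cancel_left hC]
  have h5 : ((M.E \ C) \ X).ncard + X.ncard = (M.E \ C).ncard :=
    ncard_diff_add_ncard_of_subset hX (hfin.diff)
  rw [hN₁E] at h1 h2 ⊢
  rw [h1, h2, h3, h4]
  omega

end RankAPI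

section ConnAPI

variable {M N : Matroid α} {X Y C R Z A B S T : Set α} {e : α}

lemma conn_nonneg (hfin : M.E.Finite) (hA : A ⊆ M.E) : 0 ≤ conn M A := by
  have h := rk_submod (M := M) hfin A (M.E \ A)
  rw [union_diff_cancel hA] at h
  simp only [conn, rank]
  omega

lemma kappa_set_nonempty (hS : S ⊆ M.E) (hST : Disjoint S T) :
    {k : ℤ | ∃ A, S ⊆ A ∧ A ⊆ M.E \ T ∧ conn M A = k}.Nonempty :=
  ⟨conn M S, S, Subset.rfl, subset_diff.2 ⟨hS, hST⟩, rfl⟩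

lemma kappa_bddBelow (hfin : M.E.Finite) :
    BddBelow {k : ℤ | ∃ A, S ⊆ A ∧ A ⊆ M.E \ T ∧ conn M A = k} := by
  refine ⟨0, ?_⟩
  rintro k ⟨A, hSA, hAT, rfl⟩
  exact conn_nonneg hfin (hAT.trans diff_subset)

lemma kappa_le (hfin : M.E.Finite) (hSA : S ⊆ A) (hAT : A ⊆ M.E \ T) :
    kappa M S T ≤ conn M A :=
  csInf_le (kappa_bddBelow hfin) ⟨A, hSA, hAT, rfl⟩

lemma le_kappa (hS : S ⊆ M.E) (hST : Disjoint S T) {c : ℤ}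
    (h : ∀ A, S ⊆ A → A ⊆ M.E \ T → c ≤ conn M A) : c ≤ kappa M S T := by
  refine le_csInf (kappa_set_nonempty hS hST) ?_
  rintro k ⟨A, hSA, hAT, rfl⟩
  exact h A hSA hAT

lemma kappa_exists (hfin : M.E.Finite) (hS : S ⊆ M.E) (hST : Disjoint S T) :
    ∃ A, S ⊆ A ∧ A ⊆ M.E \ T ∧ conn M A = kappa M S T :=
  Int.csInf_mem (kappa_set_nonempty hS hST) (kappa_bddBelow hfin)

lemma localConn_le_conn (hfin : N.E.Finite) (hT : T ⊆ N.E) (hSB : S ⊆ B)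
    (hB : B ⊆ N.E \ T) : localConn N S T ≤ conn N B := by
  have hBE : B ⊆ N.E := hB.trans diff_subset
  have hsub1 := rk_submod (M := N) hfin B (S ∪ T)
  have e1 : B ∪ (S ∪ T) = B ∪ T := by rw [← union_assoc, union_eq_left.mpr hSB]
  have e2 : rk N S ≤ rk N (B ∩ (S ∪ T)) :=
    rk_mono hfin (subset_inter hSB (subset_union_left.trans Subset.rfl))
  rw [e1] at hsub1
  have hsub2 := rk_submod (M := N) hfin (N.E \ B) (B ∪ T)
  have e3 : (N.E \ B) ∪ (B ∪ T) = N.E := by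
    rw [← union_assoc, diff_union_self, union_eq_left.mpr hBE, union_eq_left.mpr hT]
  have hTB : T ⊆ N.E \ B := by
    intro x hx
    exact ⟨hT hx, fun hxB => (hB hxB).2 hx⟩
  have e4 : rk N T ≤ rk N ((N.E \ B) ∩ (B ∪ T)) :=
    rk_mono hfin (subset_inter hTB subset_union_right)
  rw [e3] at hsub2
  simp only [localConn, conn, rank]
  omega

lemma conn_contr_diff_le (hfin : M.E.Finite) (hZ : Z ⊆ M.E) (hA : A ⊆ M.E) :
    conn (contr M Z) (A \ Z) ≤ conn M A := by
  have hNE : (contr M Z).E = M.E \ Z := rfl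
  have hAZ : A \ Z ⊆ M.E \ Z := diff_subset_diff_left hA
  have r1 : (rk (contr M Z) (A \ Z) : ℤ) = rk M (A ∪ Z) - rk M Z := by
    rw [rk_contr hfin hZ hAZ, diff_union_self]
  have hset : ((M.E \ Z) \ (A \ Z)) ∪ Z = (M.E \ A) ∪ Z := by
    ext x
    simp only [mem_union, mem_diff]
    tauto
  have r2 : (rk (contr M Z) ((M.E \ Z) \ (A \ Z)) : ℤ) = rk M ((M.E \ A) ∪ Z) - rk M Z := by
    rw [rk_contr hfin hZ diff_subset, hset]
  have r3 : (rk (contr M Z) (M.E \ Z) : ℤ) = rk M M.E - rk M Z := by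
    rw [rk_contr hfin hZ Subset.rfl, diff_union_of_subset hZ]
  have s1 := rk_submod (M := M) hfin A Z
  have s2 := rk_submod (M := M) hfin (M.E \ A) Z
  have s3 : rk M Z ≤ rk M (A ∩ Z) + rk M ((M.E \ A) ∩ Z) := by
    have := rk_submod (M := M) hfin (A ∩ Z) ((M.E \ A) ∩ Z)
    have hu : (A ∩ Z) ∪ ((M.E \ A) ∩ Z) = Z := by
      ext x
      simp only [mem_union, mem_inter_iff, mem_diff]
      constructor
      · tauto
      · intro hx
        by_cases hxA : x ∈ A
        · tauto
        · exact Or.inr ⟨⟨hZ hx, hxA⟩, hx⟩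
    rw [hu] at this
    omega
  simp only [conn, rank, hNE]
  rw [r1, r2, r3]
  omega

lemma localConn_contr_le_kappa (hfin : M.E.Finite) (hS : S ⊆ M.E) (hT : T ⊆ M.E)
    (hST : Disjoint S T) (hZ : Z ⊆ M.E \ (S ∪ T)) :
    localConn (contr M Z) S T ≤ kappa M S T := by
  have hNE : (contr M Z).E = M.E \ Z := rfl
  refine le_kappa hS hST ?_
  intro A hSA hAT
  have hSZ : S ⊆ A \ Z := fun x hx => ⟨hSA hx, fun hxZ => (hZ hxZ).2 (Or.inl hx)⟩
  have hTN : T ⊆ (contr M Z).E := by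
    rw [hNE]; exact fun x hx => ⟨hT hx, fun hxZ => (hZ hxZ).2 (Or.inr hx)⟩
  have hBN : A \ Z ⊆ (contr M Z).E \ T := by
    rw [hNE]
    intro x hx
    exact ⟨⟨(hAT hx.1).1, hx.2⟩, (hAT hx.1).2⟩
  have hfin' : (contr M Z).E.Finite := by rw [hNE]; exact hfin.diff
  exact (localConn_le_conn hfin' hTN hSZ hBN).trans
    (conn_contr_diff_le hfin (hZ.trans diff_subset) (hAT.trans diff_subset))

end ConnAPI

section MainProof

variable {M : Matroid α} {X Y C R Z A B S T : Set α} {e : α}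

lemma kappa_del_le (hfin : M.E.Finite) (hS : S ⊆ M.E) (hT : T ⊆ M.E) (hST : Disjoint S T)
    (heE : e ∈ M.E) (heS : e ∉ S) (heT : e ∉ T) :
    kappa (M ↾ (M.E \ {e})) S T ≤ kappa M S T := by
  obtain ⟨A, hSA, hAT, hA⟩ := kappa_exists hfin hS hST
  set D := M ↾ (M.E \ {e}) with hD
  have hDE : D.E = M.E \ {e} := rfl
  have hDfin : D.E.Finite := hfin.diff
  have hAE : A ⊆ M.E := hAT.trans diff_subset
  have hSA' : S ⊆ A \ {e} :=
    fun x hx => ⟨hSA hx, fun hxe => heS ((mem_singleton_iff.1 hxe) ▸ hx)⟩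
  have hA'T : A \ {e} ⊆ D.E \ T := by
    rw [hDE]
    rintro x ⟨hxA, hxe⟩
    exact ⟨⟨(hAT hxA).1, hxe⟩, (hAT hxA).2⟩
  refine (kappa_le hDfin hSA' hA'T).trans ?_
  rw [← hA]
  have hAe : A \ {e} ⊆ M.E \ {e} := fun x hx => ⟨hAE hx.1, hx.2⟩
  have cd : conn D (A \ {e}) =
      (rk M (A \ {e}) : ℤ) + rk M ((M.E \ {e}) \ (A \ {e})) - rk M (M.E \ {e}) := by
    simp only [conn, rank, hD, restrict_ground_eq, rk_restrict]
    rw [inter_eq_self_of_subset_left hAe,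
      inter_eq_self_of_subset_left (diff_subset : (M.E \ {e}) \ (A \ {e}) ⊆ M.E \ {e}),
      inter_self]
  have exA : conn M A = (rk M A : ℤ) + rk M (M.E \ A) - rk M M.E := by
    simp only [conn, rank]
  by_cases heA : e ∈ A
  · have hs1 : (M.E \ {e}) \ (A \ {e}) = M.E \ A := by
      ext x
      simp only [mem_diff, mem_singleton_iff]
      constructor
      · rintro ⟨⟨h1, h2⟩, h3⟩
        exact ⟨h1, fun h4 => h3 ⟨h4, h2⟩⟩
      · rintro ⟨h1, h2⟩
        exact ⟨⟨h1, fun h3 => h2 (h3 ▸ heA)⟩, fun h3 => h2 h3.1⟩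
    have hsub := rk_submod (M := M) hfin A (M.E \ {e})
    have e5 : A ∪ (M.E \ {e}) = M.E := by
      apply Subset.antisymm (union_subset hAE diff_subset)
      intro x hx
      by_cases hxe : x = e
      · exact Or.inl (hxe ▸ heA)
      · exact Or.inr ⟨hx, hxe⟩
    have e6 : A ∩ (M.E \ {e}) = A \ {e} := by
      ext x
      simp only [mem_inter_iff, mem_diff, mem_singleton_iff]
      exact ⟨fun ⟨h1, _, h3⟩ => ⟨h1, h3⟩, fun ⟨h1, h2⟩ => ⟨h1, hAE h1, h2⟩⟩
    rw [e5, e6] at hsub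
    rw [cd, exA, hs1]
    omega
  · rw [diff_singleton_eq_self heA] at cd ⊢
    have hsub := rk_submod (M := M) hfin (M.E \ A) (M.E \ {e})
    have e5 : (M.E \ A) ∪ (M.E \ {e}) = M.E := by
      apply Subset.antisymm (union_subset diff_subset diff_subset)
      intro x hx
      by_cases hxA : x ∈ A
      · exact Or.inr ⟨hx, fun hxe => heA (hxe ▸ hxA)⟩
      · exact Or.inl ⟨hx, hxA⟩
    have e6 : (M.E \ A) ∩ (M.E \ {e}) = (M.E \ {e}) \ A := by
      ext x
      simp only [mem_inter_iff, mem_diff, mem_singleton_iff]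
      tauto
    rw [e5, e6] at hsub
    rw [cd, exA]
    omega

lemma kappa_contr_le (hfin : M.E.Finite) (hS : S ⊆ M.E) (hT : T ⊆ M.E) (hST : Disjoint S T)
    (heE : e ∈ M.E) (heS : e ∉ S) (heT : e ∉ T) :
    kappa (contr M {e}) S T ≤ kappa M S T := by
  obtain ⟨A, hSA, hAT, hA⟩ := kappa_exists hfin hS hST
  set C := contr M {e} with hC
  have hCE : C.E = M.E \ {e} := rfl
  have hCfin : C.E.Finite := hfin.diff
  have hAE : A ⊆ M.E := hAT.trans diff_subset
  have hse : {e} ⊆ M.E := singleton_subset_iff.2 heE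
  have hSA' : S ⊆ A \ {e} :=
    fun x hx => ⟨hSA hx, fun hxe => heS ((mem_singleton_iff.1 hxe) ▸ hx)⟩
  have hA'T : A \ {e} ⊆ C.E \ T := by
    rw [hCE]
    rintro x ⟨hxA, hxe⟩
    exact ⟨⟨(hAT hxA).1, hxe⟩, (hAT hxA).2⟩
  refine (kappa_le hCfin hSA' hA'T).trans ?_
  rw [← hA]
  have hAe : A \ {e} ⊆ M.E \ {e} := fun x hx => ⟨hAE hx.1, hx.2⟩
  have rc1 : (rk C (A \ {e}) : ℤ) = rk M (A ∪ {e}) - rk M {e} := by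
    rw [hC, rk_contr hfin hse hAe, diff_union_self]
  have hset2 : ((M.E \ {e}) \ (A \ {e})) ∪ {e} = (M.E \ A) ∪ {e} := by
    ext x
    simp only [mem_union, mem_diff, mem_singleton_iff]
    tauto
  have rc2 : (rk C ((M.E \ {e}) \ (A \ {e})) : ℤ) = rk M ((M.E \ A) ∪ {e}) - rk M {e} := by
    rw [hC, rk_contr hfin hse (diff_subset : (M.E \ {e}) \ (A \ {e}) ⊆ M.E \ {e}), hset2]
  have rc3 : (rk C (M.E \ {e}) : ℤ) = rk M M.E - rk M {e} := by
    rw [hC, rk_contr hfin hse Subset.rfl, diff_union_of_subset hse]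
  have cc : conn C (A \ {e}) = (rk M (A ∪ {e}) : ℤ) + rk M ((M.E \ A) ∪ {e})
      - rk M {e} - (rk M M.E - rk M {e}) - rk M {e} := by
    simp only [conn, rank, hC, contr_ground, dual_ground]
    rw [rc1, rc2, rc3]
    ring
  have exA : conn M A = (rk M A : ℤ) + rk M (M.E \ A) - rk M M.E := by
    simp only [conn, rank]
  by_cases heA : e ∈ A
  · have e1 : A ∪ {e} = A := union_eq_left.mpr (singleton_subset_iff.2 heA)
    have hsub := rk_submod (M := M) hfin (M.E \ A) {e}
    rw [cc, exA, e1]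
    omega
  · have e1 : (M.E \ A) ∪ {e} = M.E \ A :=
      union_eq_left.mpr (singleton_subset_iff.2 ⟨heE, heA⟩)
    have hsub := rk_submod (M := M) hfin A {e}
    rw [cc, exA, e1]
    omega

lemma kappa_max (hfin : M.E.Finite) (hS : S ⊆ M.E) (hT : T ⊆ M.E) (hST : Disjoint S T)
    (heE : e ∈ M.E) (heS : e ∉ S) (heT : e ∉ T) :
    kappa (M ↾ (M.E \ {e})) S T = kappa M S T ∨ kappa (contr M {e}) S T = kappa M S T := by
  set D := M ↾ (M.E \ {e}) with hD
  set C := contr M {e} with hC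
  by_contra hcon
  push_neg at hcon
  obtain ⟨hne1, hne2⟩ := hcon
  have hle1 := kappa_del_le hfin hS hT hST heE heS heT
  have hle2 := kappa_contr_le hfin hS hT hST heE heS heT
  rw [← hD] at hle1
  rw [← hC] at hle2
  have hDE : D.E = M.E \ {e} := rfl
  have hCE : C.E = M.E \ {e} := rfl
  have hDfin : D.E.Finite := hfin.diff
  have hCfin : C.E.Finite := hfin.diff
  have hse : {e} ⊆ M.E := singleton_subset_iff.2 heE
  have hSE' : S ⊆ M.E \ {e} := subset_diff_singleton hS heS
  obtain ⟨A, hSA, hAT, hA⟩ := kappa_exists hDfin (show S ⊆ D.E from hSE') hST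
  obtain ⟨B, hSB, hBT, hB⟩ := kappa_exists hCfin (show S ⊆ C.E from hSE') hST
  rw [hDE] at hAT
  rw [hCE] at hBT
  have hAe : A ⊆ M.E \ {e} := hAT.trans diff_subset
  have hBe : B ⊆ M.E \ {e} := hBT.trans diff_subset
  have hAE : A ⊆ M.E := hAe.trans diff_subset
  have hBE : B ⊆ M.E := hBe.trans diff_subset
  have heA : e ∉ A := fun h => (hAe h).2 rfl
  have heB : e ∉ B := fun h => (hBe h).2 rfl
  -- expand conn D A
  have cd : conn D A = (rk M A : ℤ) + rk M ((M.E \ {e}) \ A) - rk M (M.E \ {e}) := by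
    simp only [conn, rank, hD, restrict_ground_eq, rk_restrict]
    rw [inter_eq_self_of_subset_left hAe,
      inter_eq_self_of_subset_left (diff_subset : (M.E \ {e}) \ A ⊆ M.E \ {e}), inter_self]
  -- expand conn C B
  have hsetB : ((M.E \ {e}) \ B) ∪ {e} = M.E \ B := by
    ext x
    simp only [mem_union, mem_diff, mem_singleton_iff]
    constructor
    · rintro (⟨⟨h1, h2⟩, h3⟩ | rfl)
      · exact ⟨h1, h3⟩
      · exact ⟨heE, heB⟩
    · rintro ⟨h1, h2⟩
      by_cases hxe : x = e
      · exact Or.inr hxe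
      · exact Or.inl ⟨⟨h1, hxe⟩, h2⟩
  have rc1 : (rk C B : ℤ) = rk M (B ∪ {e}) - rk M {e} := rk_contr hfin hse hBe
  have rc2 : (rk C ((M.E \ {e}) \ B) : ℤ) = rk M (M.E \ B) - rk M {e} := by
    rw [hC, rk_contr hfin hse (diff_subset : (M.E \ {e}) \ B ⊆ M.E \ {e}), hsetB]
  have rc3 : (rk C (M.E \ {e}) : ℤ) = rk M M.E - rk M {e} := by
    rw [hC, rk_contr hfin hse Subset.rfl, diff_union_of_subset hse]
  have cc : conn C B = (rk M (B ∪ {e}) : ℤ) + rk M (M.E \ B) - rk M {e}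
      - (rk M M.E - rk M {e}) - rk M {e} := by
    simp only [conn, rank, hC, contr_ground, dual_ground]
    rw [rc1, rc2, rc3]
    ring
  -- submodularity pair (i)
  have subi := rk_submod (M := M) hfin A (B ∪ {e})
  rw [← union_assoc] at subi
  have moni : rk M (A ∩ B) ≤ rk M (A ∩ (B ∪ {e})) :=
    rk_mono hfin (inter_subset_inter Subset.rfl subset_union_left)
  -- submodularity pair (ii)
  have subii := rk_submod (M := M) hfin ((M.E \ {e}) \ A) (M.E \ B)
  have hu : ((M.E \ {e}) \ A) ∪ (M.E \ B) = M.E \ (A ∩ B) := by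
    ext x
    simp only [mem_union, mem_diff, mem_singleton_iff, mem_inter_iff]
    constructor
    · rintro (⟨⟨h1, h2⟩, h3⟩ | ⟨h1, h2⟩)
      · exact ⟨h1, fun h => h3 h.1⟩
      · exact ⟨h1, fun h => h2 h.2⟩
    · rintro ⟨h1, h2⟩
      by_cases hxB : x ∈ B
      · exact Or.inl ⟨⟨h1, fun hxe => heB (hxe ▸ hxB)⟩, fun hxA => h2 ⟨hxA, hxB⟩⟩
      · exact Or.inr ⟨h1, hxB⟩
  have hv : ((M.E \ {e}) \ A) ∩ (M.E \ B) = M.E \ (A ∪ B ∪ {e}) := by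
    ext x
    simp only [mem_inter_iff, mem_diff, mem_singleton_iff, mem_union]
    tauto
  rw [hu, hv] at subii
  -- bound (iii)
  have h3a : rk M (M.E \ {e}) ≤ rk M M.E := rk_mono hfin diff_subset
  have h3b : rk M {e} ≤ 1 := rk_singleton_le hfin e
  -- kappa bounds
  have kA : kappa M S T ≤ conn M (A ∩ B) :=
    kappa_le hfin (subset_inter hSA hSB)
      (fun x hx => ⟨hAE hx.1, (hAT hx.1).2⟩)
  have kB : kappa M S T ≤ conn M (A ∪ B ∪ {e}) := by
    refine kappa_le hfin (fun x hx => Or.inl (Or.inl (hSA hx))) ?_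
    rintro x ((hx | hx) | hx)
    · exact ⟨hAE hx, (hAT hx).2⟩
    · exact ⟨hBE hx, (hBT hx).2⟩
    · rw [mem_singleton_iff] at hx
      exact ⟨hx ▸ heE, hx ▸ heT⟩
  have exU : conn M (A ∪ B ∪ {e}) =
      (rk M (A ∪ B ∪ {e}) : ℤ) + rk M (M.E \ (A ∪ B ∪ {e})) - rk M M.E := by
    simp only [conn, rank]
  have exI : conn M (A ∩ B) =
      (rk M (A ∩ B) : ℤ) + rk M (M.E \ (A ∩ B)) - rk M M.E := by
    simp only [conn, rank]
  rw [cd] at hA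
  rw [cc] at hB
  rw [exU] at kB
  rw [exI] at kA
  omega

end MainProof

lemma exists_linkage : ∀ (n : ℕ) (M : Matroid α) (S T : Set α), M.E.Finite → S ⊆ M.E →
    T ⊆ M.E → Disjoint S T → (M.E \ (S ∪ T)).ncard = n →
    ∃ Z ⊆ M.E \ (S ∪ T), localConn (contr M Z) S T = kappa M S T := by
  intro n
  induction n with
  | zero =>
    intro M S T hfin hS hT hST hn
    have hfd : (M.E \ (S ∪ T)).Finite := hfin.diff
    have hE0 : M.E \ (S ∪ T) = ∅ := (ncard_eq_zero hfd).1 hn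
    have hEST : M.E = S ∪ T :=
      Subset.antisymm (diff_eq_empty.1 hE0) (union_subset hS hT)
    refine ⟨∅, empty_subset _, ?_⟩
    have hrk : ∀ X : Set α, X ⊆ M.E → (rk (contr M ∅) X : ℤ) = rk M X := by
      intro X hX
      rw [rk_contr hfin (empty_subset _) (by simpa using hX), union_empty, rk_empty hfin]
      simp
    have hlc : localConn (contr M ∅) S T = localConn M S T := by
      simp only [localConn]
      have h1 := hrk S hS
      have h2 := hrk T hT
      have h3 := hrk (S ∪ T) (union_subset hS hT)
      omega
    rw [hlc]
    have hES : M.E \ S = T := by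
      rw [hEST, union_diff_left, hST.symm.sdiff_eq_left]
    have hge : kappa M S T ≤ localConn M S T := by
      have hk := kappa_le hfin (Subset.rfl : S ⊆ S) (subset_diff.2 ⟨hS, hST⟩)
      have hcl : conn M S = localConn M S T := by
        simp only [conn, rank, localConn, hES, ← hEST]
      rwa [hcl] at hk
    have hle : localConn M S T ≤ kappa M S T := by
      have h := localConn_contr_le_kappa hfin hS hT hST (empty_subset (M.E \ (S ∪ T)))
      rwa [hlc] at h
    exact le_antisymm hle hge
  | succ n ih =>
    intro M S T hfin hS hT hST hn
    have hfd : (M.E \ (S ∪ T)).Finite := hfin.diff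
    obtain ⟨e, he⟩ := nonempty_of_ncard_ne_zero (s := M.E \ (S ∪ T))
      (by rw [hn]; exact n.succ_ne_zero)
    have heE : e ∈ M.E := he.1
    have heS : e ∉ S := fun h => he.2 (Or.inl h)
    have heT : e ∉ T := fun h => he.2 (Or.inr h)
    have hSE' : S ⊆ M.E \ {e} := subset_diff_singleton hS heS
    have hTE' : T ⊆ M.E \ {e} := subset_diff_singleton hT heT
    have hEe : (M.E \ {e}).Finite := hfin.diff
    have hcard : ((M.E \ {e}) \ (S ∪ T)).ncard = n := by
      rw [diff_diff_comm, ncard_diff_singleton_of_mem he, hn]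
      omega
    rcases kappa_max hfin hS hT hST heE heS heT with hk | hk
    · -- deletion case
      obtain ⟨Z, hZsub, hZ⟩ := ih (M ↾ (M.E \ {e})) S T hEe hSE' hTE' hST hcard
      have hZsub' : Z ⊆ (M.E \ {e}) \ (S ∪ T) := hZsub
      have hZe : Z ⊆ M.E \ {e} := hZsub'.trans diff_subset
      have hZE : Z ⊆ M.E := hZe.trans diff_subset
      have hZST : Z ⊆ M.E \ (S ∪ T) := fun x hx => ⟨(hZe hx).1, (hZsub' hx).2⟩
      refine ⟨Z, hZST, ?_⟩
      have htrans : ∀ X : Set α, X ⊆ M.E \ {e} → Disjoint X Z →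
          (rk (contr (M ↾ (M.E \ {e})) Z) X : ℤ) = rk (contr M Z) X := by
        intro X hX hXZ
        have hXZ' : X ⊆ (M.E \ {e}) \ Z := subset_diff.2 ⟨hX, hXZ⟩
        rw [rk_contr (M := M ↾ (M.E \ {e})) hEe hZe hXZ', rk_restrict, rk_restrict,
          inter_eq_self_of_subset_left (union_subset hX hZe),
          inter_eq_self_of_subset_left hZe,
          rk_contr hfin hZE (subset_diff.2 ⟨hX.trans diff_subset, hXZ⟩)]
      have hdS : Disjoint S Z := disjoint_left.2 fun x hxS hxZ => (hZsub' hxZ).2 (Or.inl hxS)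
      have hdT : Disjoint T Z := disjoint_left.2 fun x hxT hxZ => (hZsub' hxZ).2 (Or.inr hxT)
      have h1 := htrans S hSE' hdS
      have h2 := htrans T hTE' hdT
      have h3 := htrans (S ∪ T) (union_subset hSE' hTE') (disjoint_union_left.2 ⟨hdS, hdT⟩)
      have hlc : localConn (contr (M ↾ (M.E \ {e})) Z) S T = localConn (contr M Z) S T := by
        simp only [localConn]
        omega
      rw [← hlc, hZ, hk]
    · -- contraction case
      obtain ⟨Z, hZsub, hZ⟩ := ih (contr M {e}) S T hEe hSE' hTE' hST hcard
      have hZsub' : Z ⊆ (M.E \ {e}) \ (S ∪ T) := hZsub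
      have hZe : Z ⊆ M.E \ {e} := hZsub'.trans diff_subset
      have hZE : Z ⊆ M.E := hZe.trans diff_subset
      have hse : {e} ⊆ M.E := singleton_subset_iff.2 heE
      have hiZ : insert e Z ⊆ M.E \ (S ∪ T) :=
        insert_subset he (fun x hx => ⟨(hZe hx).1, (hZsub' hx).2⟩)
      refine ⟨insert e Z, hiZ, ?_⟩
      have htrans : ∀ X : Set α, X ⊆ M.E \ {e} → Disjoint X Z →
          (rk (contr (contr M {e}) Z) X : ℤ) = rk (contr M (insert e Z)) X := by
        intro X hX hXZ
        have hXZ' : X ⊆ (M.E \ {e}) \ Z := subset_diff.2 ⟨hX, hXZ⟩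
        have heX : e ∉ X := fun h => (hX h).2 rfl
        have hdins : Disjoint X (insert e Z) := by
          refine disjoint_right.2 fun x hx hxX => ?_
          rcases mem_insert_iff.1 hx with h | h
          · exact heX (h ▸ hxX)
          · exact disjoint_left.1 hXZ hxX h
        rw [rk_contr (M := contr M {e}) hEe hZe hXZ',
          rk_contr hfin hse (union_subset hX hZe),
          rk_contr hfin hse hZe,
          rk_contr hfin (insert_subset heE hZE) (subset_diff.2 ⟨hX.trans diff_subset, hdins⟩),
          union_singleton, union_singleton, union_insert]
        ring
      have hdS : Disjoint S Z := disjoint_left.2 fun x hxS hxZ => (hZsub' hxZ).2 (Or.inl hxS)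
      have hdT : Disjoint T Z := disjoint_left.2 fun x hxT hxZ => (hZsub' hxZ).2 (Or.inr hxT)
      have h1 := htrans S hSE' hdS
      have h2 := htrans T hTE' hdT
      have h3 := htrans (S ∪ T) (union_subset hSE' hTE') (disjoint_union_left.2 ⟨hdS, hdT⟩)
      have hlc : localConn (contr (contr M {e}) Z) S T
          = localConn (contr M (insert e Z)) S T := by
        simp only [localConn]
        omega
      rw [← hlc, hZ, hk]

/-- Tutte's Linking Theorem: `κ_M(S,T) = max { ⊓_{M/Z}(S,T) : Z ⊆ E \ (S ∪ T) }`. -/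
theorem stmt5 {α : Type*} (M : Matroid α) (hfin : M.E.Finite)
    (S T : Set α) (hS : S ⊆ M.E) (hT : T ⊆ M.E) (hST : Disjoint S T) :
    (∀ Z ⊆ M.E \ (S ∪ T), localConn (contr M Z) S T ≤ kappa M S T) ∧
    (∃ Z ⊆ M.E \ (S ∪ T), localConn (contr M Z) S T = kappa M S T) := by
  constructor
  · intro Z hZ
    exact localConn_contr_le_kappa hfin hS hT hST hZ
  · exact exists_linkage _ M S T hfin hS hT hST rfl

end Paper
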